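/- Let α > −1 and a ∈ ℝ∖{0}. Let h be the monic Hermite polynomials and ℓ^{(α)} the monic Laguerre orthogonal polynomial sequence, and for n ≥ 0 define the 2×2 matrix polynomial Qₙ(x) = [[hₙ(x), a(ℓₙ₊₁^{(α)}(x) − x·hₙ(x))], [−a·n·(2^{n−1}/√π)·Γ(n+α+1)·hₙ₋₁(x), a²·n·(2^{n−1}/√π)·Γ(n+α+1)·x·hₙ₋₁(x) + ℓₙ^{(α)}(x)]] (for n = 0 the terms with factor n vanish). Then for all n ≥ 0 and all x: Qₙ''(x)·[[1, 2ax²−ax], [0, 2x]] + Qₙ'(x)·[[−2x, 2ax(α+3)], [0, 2(α+1−x)]] + Qₙ(x)·[[−2, 2a(α+1)], [0, 0]] = [[−2n−2, 0], [0, −2n]]·Qₙ(x). -/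

import Mathlib

open MeasureTheory Matrix Polynomial Real
open Filter

noncomputable section



/-- A linear functional vanishing on a monic graded family vanishes on low degrees. -/
lemma vanish_of_lt (L : Polynomial ℝ → ℝ)
    (Ladd : ∀ p q, L (p + q) = L p + L q)
    (Lsmul : ∀ (c : ℝ) p, L (C c * p) = c * L p)
    (f : ℕ → Polynomial ℝ) (hm : ∀ k, (f k).Monic) (hd : ∀ k, (f k).natDegree = k)
    (n : ℕ) (hf : ∀ m, m < n → L (f m) = 0) :
    ∀ p : Polynomial ℝ, p.degree < n → L p = 0 := by
  have L0 : L 0 = 0 := by simpa using Lsmul 0 0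
  suffices H : ∀ k, ∀ p : Polynomial ℝ, p.natDegree ≤ k → p.degree < n → L p = 0 by
    exact fun p hp => H p.natDegree p le_rfl hp
  intro k
  induction k with
  | zero =>
    intro p hp0 hpn
    by_cases h0 : p = 0
    · simp [h0, L0]
    · have hn0 : 0 < n := by
        by_contra hn
        have : n = 0 := by omega
        subst this
        simp [Polynomial.degree_eq_natDegree h0] at hpn
      have hp : p = C (p.coeff 0) := Polynomial.eq_C_of_natDegree_le_zero hp0
      have hf0 : f 0 = 1 := by
        have := hm 0
        exact (Polynomial.Monic.natDegree_eq_zero (hm 0)).mp (hd 0)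
      have : L p = p.coeff 0 * L (f 0) := by
        calc L p = L (C (p.coeff 0) * f 0) := by rw [hf0, mul_one, ← hp]
        _ = p.coeff 0 * L (f 0) := Lsmul _ _
      rw [this, hf 0 hn0, mul_zero]
  | succ k ih =>
    intro p hpk hpn
    by_cases hk : p.natDegree ≤ k
    · exact ih p hk hpn
    · have hdk : p.natDegree = k + 1 := by omega
      have h0 : p ≠ 0 := by
        intro h; rw [h] at hdk; simp at hdk
      have hkn : (k + 1 : ℕ) < n := by
        have := hpn
        rw [Polynomial.degree_eq_natDegree h0, hdk] at this
        exact_mod_cast this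
      set q : Polynomial ℝ := p - C p.leadingCoeff * f (k + 1) with hq
      have hdeg : (C p.leadingCoeff * f (k + 1)).degree = p.degree := by
        rw [Polynomial.degree_C_mul (by
          simpa [Polynomial.leadingCoeff_ne_zero] using h0),
          Polynomial.degree_eq_natDegree (hm (k+1)).ne_zero,
          hd (k+1), Polynomial.degree_eq_natDegree h0, hdk]
      have hlc : p.leadingCoeff = (C p.leadingCoeff * f (k + 1)).leadingCoeff := by
        rw [Polynomial.leadingCoeff_mul, Polynomial.leadingCoeff_C, (hm (k+1)).leadingCoeff,
          mul_one]
      have hqd : q.degree < p.degree := Polynomial.degree_sub_lt hdeg.symm h0 hlc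
      have hqn : q.degree < n := lt_trans hqd (by
        rw [Polynomial.degree_eq_natDegree h0, hdk]; exact_mod_cast hkn)
      have hqk : q.natDegree ≤ k := by
        by_cases hq0 : q = 0
        · simp [hq0]
        · have := hqd
          rw [Polynomial.degree_eq_natDegree h0, hdk, Polynomial.degree_eq_natDegree hq0] at this
          exact_mod_cast Nat.lt_succ_iff.mp (by exact_mod_cast this)
      have : L p = L q + p.leadingCoeff * L (f (k + 1)) := by
        have heq : p = q + C p.leadingCoeff * f (k + 1) := by ring
        conv_lhs => rw [heq]
        rw [Ladd, Lsmul]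
      rw [this, hf (k + 1) hkn, mul_zero, add_zero]
      exact ih q hqk hqn

/-- polynomial times decaying exponential tends to zero. -/
lemma poly_exp_top (p : Polynomial ℝ) (b : ℝ) (hb : 0 < b) :
    Tendsto (fun x => p.eval x * Real.exp (-(b * x))) atTop (nhds 0) := by
  have h1 : Tendsto (fun x : ℝ => b * x) atTop atTop :=
    Tendsto.const_mul_atTop hb tendsto_id
  have h2 := (p.comp (C b⁻¹ * X)).tendsto_div_exp_atTop.comp h1
  have : (fun x => (p.comp (C b⁻¹ * X)).eval (b * x) / Real.exp (b * x))
      = fun x => p.eval x * Real.exp (-(b * x)) := by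
    funext x
    rw [Polynomial.eval_comp]
    simp [Real.exp_neg, div_eq_mul_inv, inv_mul_cancel_left₀ hb.ne']
  rw [← this]
  exact h2

lemma gauss_top (p : Polynomial ℝ) :
    Tendsto (fun x => p.eval x * Real.exp (-x ^ 2)) atTop (nhds 0) := by
  have h1 := poly_exp_top p 1 one_pos
  have h2 : Tendsto (fun x : ℝ => Real.exp (x - x ^ 2)) atTop (nhds 0) := by
    have hub : ∀ x : ℝ, Real.exp (x - x ^ 2) ≤ Real.exp (1 - x) := by
      intro x
      apply Real.exp_le_exp.mpr
      nlinarith [sq_nonneg (x - 1)]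
    have hlim : Tendsto (fun x : ℝ => Real.exp (1 - x)) atTop (nhds 0) := by
      apply Real.tendsto_exp_atBot.comp
      apply tendsto_atBot_add_const_left
      exact tendsto_neg_atBot_iff.mpr tendsto_id
    exact squeeze_zero (fun x => (Real.exp_pos _).le) hub hlim
  have := h1.mul h2
  rw [mul_zero] at this
  apply this.congr
  intro x
  rw [mul_assoc, ← Real.exp_add]
  ring_nf

lemma gauss_bot (p : Polynomial ℝ) :
    Tendsto (fun x => p.eval x * Real.exp (-x ^ 2)) atBot (nhds 0) := by
  have h1 := (gauss_top (p.comp (-X))).comp tendsto_neg_atBot_atTop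
  apply h1.congr
  intro x
  simp [Function.comp, Polynomial.eval_comp, neg_sq]

/-- Integrability of polynomial against the Gaussian weight. -/
lemma gauss_int (p : Polynomial ℝ) :
    Integrable (fun x => p.eval x * Real.exp (-x ^ 2)) := by
  induction p using Polynomial.induction_on' with
  | add p q hp hq => simp only [Polynomial.eval_add, add_mul]; exact hp.add hq
  | monomial i c =>
    have hbase : Integrable (fun x : ℝ => |x ^ (i : ℝ) * Real.exp (-1 * x ^ 2)|) :=
      (integrable_rpow_mul_exp_neg_mul_sq one_pos
        (lt_of_lt_of_le neg_one_lt_zero (Nat.cast_nonneg i))).abs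
    apply Integrable.mono' (hbase.const_mul |c|)
    · apply Continuous.aestronglyMeasurable
      continuity
    · filter_upwards with x
      simp only [Polynomial.eval_monomial, Real.norm_eq_abs, Real.rpow_natCast, abs_mul,
        Real.abs_exp, neg_one_mul, mul_assoc]
      exact le_refl _

lemma gauss_hasDeriv (p q : Polynomial ℝ) (x : ℝ) :
    HasDerivAt (fun y => (derivative p * q).eval y * Real.exp (-y ^ 2))
      (((derivative (derivative p) - C 2 * X * derivative p) * q
        + derivative p * derivative q).eval x * Real.exp (-x ^ 2)) x := by
  have h1 : HasDerivAt (fun y : ℝ => (derivative p * q).eval y)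
      ((derivative (derivative p * q)).eval x) x := Polynomial.hasDerivAt _ x
  have h2 : HasDerivAt (fun y : ℝ => Real.exp (-y ^ 2))
      (Real.exp (-x ^ 2) * (-(2 * x))) x := by
    have hx : HasDerivAt (fun y : ℝ => -y ^ 2) (-(2 * x)) x := by
      exact (hasDerivAt_pow 2 x).neg.congr_deriv (by norm_num)
    exact (Real.hasDerivAt_exp _).comp x hx
  have := h1.mul h2
  refine this.congr_deriv ?_
  simp only [Polynomial.derivative_mul, Polynomial.eval_add, Polynomial.eval_mul,
    Polynomial.eval_sub, Polynomial.eval_C, Polynomial.eval_X]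
  ring

lemma gauss_ibp (p q : Polynomial ℝ) :
    ∫ x : ℝ, ((derivative (derivative p) - C 2 * X * derivative p) * q).eval x
        * Real.exp (-x ^ 2)
      = - ∫ x : ℝ, (derivative p * derivative q).eval x * Real.exp (-x ^ 2) := by
  set A : Polynomial ℝ := (derivative (derivative p) - C 2 * X * derivative p) * q
  set B : Polynomial ℝ := derivative p * derivative q
  have hint : Integrable (fun x : ℝ => (A + B).eval x * Real.exp (-x ^ 2)) := gauss_int _
  have hzero : ∫ x : ℝ, (A + B).eval x * Real.exp (-x ^ 2) = 0 := by
    have := integral_of_hasDerivAt_of_tendsto (f := fun y => (derivative p * q).eval y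
        * Real.exp (-y ^ 2))
      (f' := fun x => (A + B).eval x * Real.exp (-x ^ 2))
      (fun x => by simpa [A, B, add_mul] using gauss_hasDeriv p q x)
      hint (gauss_bot _) (gauss_top _)
    simpa using this
  have hA : Integrable (fun x : ℝ => A.eval x * Real.exp (-x ^ 2)) := gauss_int _
  have hB : Integrable (fun x : ℝ => B.eval x * Real.exp (-x ^ 2)) := gauss_int _
  have : ∫ x : ℝ, (A.eval x * Real.exp (-x ^ 2) + B.eval x * Real.exp (-x ^ 2)) = 0 := by
    rw [← hzero]
    congr 1
    funext x
    simp [add_mul]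
  rw [integral_add hA hB] at this
  linarith

lemma gauss_pos (r : Polynomial ℝ)
    (hr : ∫ x : ℝ, (r * r).eval x * Real.exp (-x ^ 2) = 0) : r = 0 := by
  by_contra h0
  have hnn : (0 : ℝ → ℝ) ≤ fun x => (r * r).eval x * Real.exp (-x ^ 2) := by
    intro x
    simp only [Polynomial.eval_mul, Pi.zero_apply]
    exact mul_nonneg (mul_self_nonneg _) (Real.exp_pos _).le
  have := (integral_eq_zero_iff_of_nonneg hnn (gauss_int _)).mp hr
  have hae : ∀ᵐ x : ℝ, r.eval x = 0 := by
    filter_upwards [this] with x hx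
    simp only [Pi.zero_apply, Polynomial.eval_mul] at hx
    rcases mul_eq_zero.mp hx with h | h
    · exact mul_self_eq_zero.mp h
    · exact absurd h (Real.exp_pos _).ne'
  have hfin : Set.Finite {x : ℝ | r.eval x = 0} := by
    simpa [Polynomial.IsRoot] using Polynomial.finite_setOf_isRoot h0
  have hzero : volume {x : ℝ | ¬ r.eval x = 0} = 0 := by
    rw [← MeasureTheory.ae_iff] at *
    exact hae
  have : (volume : Measure ℝ) Set.univ ≤ volume {x : ℝ | r.eval x = 0}
      + volume {x : ℝ | ¬ r.eval x = 0} := by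
    calc (volume : Measure ℝ) Set.univ
        = volume ({x : ℝ | r.eval x = 0} ∪ {x : ℝ | r.eval x = 0}ᶜ) := by
          rw [Set.union_compl_self]
      _ ≤ _ := measure_union_le _ _
  rw [hfin.measure_zero, hzero, Real.volume_univ] at this
  simp at this

lemma deg_Lop_le (p : Polynomial ℝ) :
    (derivative (derivative p) - C 2 * X * derivative p).natDegree ≤ p.natDegree := by
  by_cases h0 : p.natDegree = 0
  · have hp : derivative p = 0 := by
      rw [Polynomial.eq_C_of_natDegree_le_zero h0.le]; simp
    simp [hp]
  · apply le_trans (Polynomial.natDegree_sub_le _ _)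
    apply max_le
    · exact le_trans (Polynomial.natDegree_derivative_le _)
        (le_trans (Nat.sub_le _ _) (le_trans (Polynomial.natDegree_derivative_le _)
          (Nat.sub_le _ _)))
    · apply le_trans (Polynomial.natDegree_mul_le)
      have h1 : (C (2:ℝ) * X).natDegree ≤ 1 :=
        le_trans Polynomial.natDegree_mul_le (by simp)
      have h2 : (derivative p).natDegree ≤ p.natDegree - 1 :=
        Polynomial.natDegree_derivative_le _
      omega

lemma gauss_Jadd (p q : Polynomial ℝ) :
    ∫ x : ℝ, (p + q).eval x * Real.exp (-x ^ 2)
      = (∫ x : ℝ, p.eval x * Real.exp (-x ^ 2)) + ∫ x : ℝ, q.eval x * Real.exp (-x ^ 2) := by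
  rw [← integral_add (gauss_int p) (gauss_int q)]
  congr 1; funext x; simp [add_mul]

lemma gauss_Jsmul (c : ℝ) (p : Polynomial ℝ) :
    ∫ x : ℝ, (C c * p).eval x * Real.exp (-x ^ 2)
      = c * ∫ x : ℝ, p.eval x * Real.exp (-x ^ 2) := by
  rw [← integral_const_mul]
  congr 1; funext x; simp [mul_assoc]

lemma gauss_orth_lower (h : ℕ → Polynomial ℝ)
    (hm : ∀ n, (h n).Monic) (hd : ∀ n, (h n).natDegree = n)
    (horth : ∀ n m : ℕ, n ≠ m →
      ∫ x : ℝ, (h n).eval x * (h m).eval x * Real.exp (-x ^ 2) = 0)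
    (n : ℕ) (s : Polynomial ℝ) (hs : s.degree < n) :
    ∫ x : ℝ, (s * h n).eval x * Real.exp (-x ^ 2) = 0 := by
  refine vanish_of_lt (fun t => ∫ x : ℝ, (t * h n).eval x * Real.exp (-x ^ 2))
    (fun p q => ?_) (fun c p => ?_) h hm hd n (fun m hmn => ?_) s hs
  · beta_reduce
    rw [show (p + q) * h n = p * h n + q * h n by ring, gauss_Jadd]
  · beta_reduce
    rw [show C c * p * h n = C c * (p * h n) by ring, gauss_Jsmul]
  · have := horth m n (ne_of_lt hmn)
    beta_reduce
    rw [← this]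
    congr 1; funext x; simp [Polynomial.eval_mul, mul_assoc]

lemma hermite_ode (h : ℕ → Polynomial ℝ)
    (hm : ∀ n, (h n).Monic) (hd : ∀ n, (h n).natDegree = n)
    (horth : ∀ n m : ℕ, n ≠ m →
      ∫ x : ℝ, (h n).eval x * (h m).eval x * Real.exp (-x ^ 2) = 0)
    (n : ℕ) :
    derivative (derivative (h n)) - C 2 * X * derivative (h n)
      + C (2 * (n : ℝ)) * h n = 0 := by
  by_cases hn0 : n = 0
  · subst hn0
    have h1 : h 0 = 1 := ((hm 0).natDegree_eq_zero).mp (hd 0)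
    simp [h1]
  · set p := h n with hp
    set r := derivative (derivative p) - C 2 * X * derivative p + C (2 * (n : ℝ)) * p with hr
    obtain ⟨k, rfl⟩ : ∃ k, n = k + 1 := ⟨n - 1, by omega⟩
    have hcoeffp : p.coeff (k + 1) = 1 := by
      have := (hm (k + 1)).coeff_natDegree
      rwa [hd (k + 1)] at this
    have hrnat : r.natDegree ≤ k + 1 := by
      apply le_trans (Polynomial.natDegree_add_le _ _)
      apply max_le
      · exact le_trans (deg_Lop_le p) (le_of_eq (hd _))
      · exact le_trans (Polynomial.natDegree_C_mul_le _ _) (le_of_eq (hd _))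
    have hrdeg : r.degree < ((k + 1 : ℕ) : ℕ) := by
      rw [Polynomial.degree_lt_iff_coeff_zero]
      intro m hm'
      rcases eq_or_lt_of_le hm' with heq | hlt
      · subst heq
        have hd' : (derivative p).natDegree ≤ k := by
          have := Polynomial.natDegree_derivative_le p
          rw [hd (k + 1)] at this; omega
        have hc1 : (derivative (derivative p)).coeff (k + 1) = 0 := by
          apply Polynomial.coeff_eq_zero_of_natDegree_lt
          have := Polynomial.natDegree_derivative_le (derivative p)
          omega
        have hc2 : (C (2:ℝ) * X * derivative p).coeff (k + 1) = 2 * ((k:ℝ) + 1) := by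
          rw [mul_assoc, Polynomial.coeff_C_mul, Polynomial.coeff_X_mul,
            Polynomial.coeff_derivative, hcoeffp]
          push_cast; ring
        have hc3 : (C (2 * ((k:ℝ) + 1)) * p).coeff (k + 1) = 2 * ((k:ℝ) + 1) := by
          rw [Polynomial.coeff_C_mul, hcoeffp, mul_one]
        rw [hr]
        rw [Polynomial.coeff_add, Polynomial.coeff_sub, hc1, hc2]
        push_cast at hc3 ⊢
        rw [hc3]
        ring
      · exact Polynomial.coeff_eq_zero_of_natDegree_lt (lt_of_le_of_lt hrnat hlt)
    have horthr : ∀ m, m < k + 1 →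
        ∫ x : ℝ, (r * h m).eval x * Real.exp (-x ^ 2) = 0 := by
      intro m hmn
      have e1 := gauss_ibp p (h m)
      have e2 := gauss_ibp (h m) p
      have e3 : ∫ x : ℝ, ((derivative (derivative (h m)) - C 2 * X * derivative (h m)) * p).eval x
          * Real.exp (-x ^ 2) = 0 := by
        apply gauss_orth_lower h hm hd horth (k + 1)
        calc (derivative (derivative (h m)) - C 2 * X * derivative (h m)).degree
            ≤ ((derivative (derivative (h m)) - C 2 * X * derivative (h m)).natDegree : WithBot ℕ) :=
              Polynomial.degree_le_natDegree
          _ < ((k + 1 : ℕ) : WithBot ℕ) := by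
              exact_mod_cast lt_of_le_of_lt (le_trans (deg_Lop_le (h m)) (le_of_eq (hd m))) hmn
      have e4 : ∫ x : ℝ, (p * h m).eval x * Real.exp (-x ^ 2) = 0 := by
        have := horth (k + 1) m (by omega)
        rw [← this]
        congr 1; funext x; simp [hp, Polynomial.eval_mul, mul_assoc]
      have e5 : ∫ x : ℝ, (derivative p * derivative (h m)).eval x * Real.exp (-x ^ 2)
          = ∫ x : ℝ, (derivative (h m) * derivative p).eval x * Real.exp (-x ^ 2) := by
        rw [mul_comm]
      calc ∫ x : ℝ, (r * h m).eval x * Real.exp (-x ^ 2)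
          = ∫ x : ℝ, ((derivative (derivative p) - C 2 * X * derivative p) * h m
              + C (2 * ((k:ℝ) + 1)) * (p * h m)).eval x * Real.exp (-x ^ 2) := by
            congr 1; funext x; rw [hr]; push_cast; ring_nf
        _ = (∫ x : ℝ, ((derivative (derivative p) - C 2 * X * derivative p) * h m).eval x
              * Real.exp (-x ^ 2))
            + (2 * ((k:ℝ) + 1)) * ∫ x : ℝ, (p * h m).eval x * Real.exp (-x ^ 2) := by
            rw [gauss_Jadd, gauss_Jsmul]
        _ = 0 := by
            rw [e4, mul_zero, add_zero, e1, e5, ← e2, e3]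
    have hrr : ∫ x : ℝ, (r * r).eval x * Real.exp (-x ^ 2) = 0 := by
      refine vanish_of_lt (fun t => ∫ x : ℝ, (r * t).eval x * Real.exp (-x ^ 2))
        (fun p' q' => ?_) (fun c p' => ?_) h hm hd (k + 1) (fun m hmn => horthr m hmn) r hrdeg
      · beta_reduce
        rw [show r * (p' + q') = r * p' + r * q' by ring, gauss_Jadd]
      · beta_reduce
        rw [show r * (C c * p') = C c * (r * p') by ring, gauss_Jsmul]
    exact gauss_pos r hrr
lemma lag_int {α : ℝ} (hα : -1 < α) (p : Polynomial ℝ) :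
    IntegrableOn (fun x => p.eval x * (Real.exp (-x) * x ^ α)) (Set.Ioi 0) := by
  induction p using Polynomial.induction_on' with
  | add p q hp hq => simp only [Polynomial.eval_add, add_mul]; exact hp.add hq
  | monomial i c =>
    have hpos : 0 < α + i + 1 := by
      have : (0:ℝ) ≤ i := Nat.cast_nonneg i
      linarith
    have hbase : IntegrableOn (fun x => Real.exp (-x) * x ^ (α + i + 1 - 1)) (Set.Ioi 0) :=
      Real.GammaIntegral_convergent hpos
    apply MeasureTheory.IntegrableOn.congr_fun (hbase.const_mul c) ?_ measurableSet_Ioi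
    intro x hx
    have hx' : (0:ℝ) < x := hx
    simp only [Polynomial.eval_monomial]
    rw [show α + (i:ℝ) + 1 - 1 = α + i by ring, Real.rpow_add hx', Real.rpow_natCast]
    ring

lemma lag_top {α : ℝ} (p : Polynomial ℝ) :
    Tendsto (fun x => x ^ (α + 1) * (Real.exp (-x) * p.eval x)) atTop (nhds 0) := by
  have h1 := tendsto_rpow_mul_exp_neg_mul_atTop_nhds_zero (α + 1) 2⁻¹ (by norm_num)
  have h2 := poly_exp_top p 2⁻¹ (by norm_num)
  have h3 := h1.mul h2
  rw [mul_zero] at h3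
  apply h3.congr
  intro x
  have e : Real.exp (-2⁻¹ * x) * Real.exp (-(2⁻¹ * x)) = Real.exp (-x) := by
    rw [← Real.exp_add]; ring_nf
  rw [mul_mul_mul_comm, e]
  ring

lemma lag_hasDeriv (α : ℝ) (p q : Polynomial ℝ) (x : ℝ) (hx : x ∈ Set.Ioi (0:ℝ)) :
    HasDerivAt (fun y => y ^ (α + 1) * (Real.exp (-y) * (derivative p * q).eval y))
      (((X * derivative (derivative p) + (C (α + 1) - X) * derivative p) * q
        + X * derivative p * derivative q).eval x * (Real.exp (-x) * x ^ α)) x := by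
  have hx0 : (0:ℝ) < x := hx
  have h1 : HasDerivAt (fun y : ℝ => y ^ (α + 1)) ((α + 1) * x ^ α) x := by
    have := Real.hasDerivAt_rpow_const (x := x) (p := α + 1) (Or.inl hx0.ne')
    rwa [show α + 1 - 1 = α by ring] at this
  have hexp : HasDerivAt (fun y : ℝ => Real.exp (-y)) (-Real.exp (-x)) x := by
    have := (Real.hasDerivAt_exp (-x)).comp x (hasDerivAt_neg x)
    exact this.congr_deriv (by ring)
  have hpoly : HasDerivAt (fun y : ℝ => (derivative p * q).eval y)
      ((derivative (derivative p * q)).eval x) x := Polynomial.hasDerivAt _ x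
  have h2 := hexp.mul hpoly
  have h3 := h1.mul h2
  refine h3.congr_deriv ?_
  rw [show x ^ (α + 1) = x ^ α * x from Real.rpow_add_one hx0.ne' α]
  simp only [Pi.mul_apply, Polynomial.derivative_mul, Polynomial.eval_add, Polynomial.eval_mul,
    Polynomial.eval_sub, Polynomial.eval_C, Polynomial.eval_X]
  ring

lemma lag_ibp {α : ℝ} (hα : -1 < α) (p q : Polynomial ℝ) :
    ∫ x in Set.Ioi (0:ℝ), ((X * derivative (derivative p) + (C (α + 1) - X) * derivative p)
        * q).eval x * (Real.exp (-x) * x ^ α)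
      = - ∫ x in Set.Ioi (0:ℝ), (X * derivative p * derivative q).eval x
          * (Real.exp (-x) * x ^ α) := by
  set A : Polynomial ℝ := (X * derivative (derivative p) + (C (α + 1) - X) * derivative p) * q
  set B : Polynomial ℝ := X * derivative p * derivative q
  have hint : IntegrableOn (fun x => (A + B).eval x * (Real.exp (-x) * x ^ α)) (Set.Ioi 0) :=
    lag_int hα _
  have hcont : ContinuousWithinAt
      (fun y => y ^ (α + 1) * (Real.exp (-y) * (derivative p * q).eval y)) (Set.Ici 0) 0 := by
    apply ContinuousAt.continuousWithinAt
    apply ContinuousAt.mul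
    · exact Real.continuousAt_rpow_const 0 (α + 1) (Or.inr (by linarith))
    · exact ((Real.continuous_exp.comp continuous_neg).mul
        (Polynomial.continuous _)).continuousAt
  have hzero : ∫ x in Set.Ioi (0:ℝ), (A + B).eval x * (Real.exp (-x) * x ^ α) = 0 := by
    have := integral_Ioi_of_hasDerivAt_of_tendsto (a := (0:ℝ))
      (f := fun y => y ^ (α + 1) * (Real.exp (-y) * (derivative p * q).eval y))
      (f' := fun x => (A + B).eval x * (Real.exp (-x) * x ^ α))
      hcont
      (fun x hx => by simpa [A, B, add_mul] using lag_hasDeriv α p q x hx)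
      hint (lag_top _)
    rw [this]
    simp [Real.zero_rpow (show α + 1 ≠ 0 by linarith)]
  have hA : IntegrableOn (fun x => A.eval x * (Real.exp (-x) * x ^ α)) (Set.Ioi 0) :=
    lag_int hα _
  have hB : IntegrableOn (fun x => B.eval x * (Real.exp (-x) * x ^ α)) (Set.Ioi 0) :=
    lag_int hα _
  have heq : (fun x => (A + B).eval x * (Real.exp (-x) * x ^ α))
      = fun x => A.eval x * (Real.exp (-x) * x ^ α) + B.eval x * (Real.exp (-x) * x ^ α) :=
    funext fun x => by simp [add_mul]
  rw [heq, integral_add hA hB] at hzero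
  linarith

lemma lag_Jadd {α : ℝ} (hα : -1 < α) (p q : Polynomial ℝ) :
    ∫ x in Set.Ioi (0:ℝ), (p + q).eval x * (Real.exp (-x) * x ^ α)
      = (∫ x in Set.Ioi (0:ℝ), p.eval x * (Real.exp (-x) * x ^ α))
        + ∫ x in Set.Ioi (0:ℝ), q.eval x * (Real.exp (-x) * x ^ α) := by
  rw [← integral_add (lag_int hα p) (lag_int hα q)]
  rw [show (fun x => (p + q).eval x * (Real.exp (-x) * x ^ α))
    = fun x => p.eval x * (Real.exp (-x) * x ^ α) + q.eval x * (Real.exp (-x) * x ^ α)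
    from funext fun x => by simp [add_mul]]

lemma lag_Jsmul {α : ℝ} (c : ℝ) (p : Polynomial ℝ) :
    ∫ x in Set.Ioi (0:ℝ), (C c * p).eval x * (Real.exp (-x) * x ^ α)
      = c * ∫ x in Set.Ioi (0:ℝ), p.eval x * (Real.exp (-x) * x ^ α) := by
  rw [← integral_const_mul]
  rw [show (fun x => (C c * p).eval x * (Real.exp (-x) * x ^ α))
    = fun x => c * (p.eval x * (Real.exp (-x) * x ^ α))
    from funext fun x => by simp [mul_assoc]]

lemma lag_pos {α : ℝ} (hα : -1 < α) (r : Polynomial ℝ)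
    (hr : ∫ x in Set.Ioi (0:ℝ), (r * r).eval x * (Real.exp (-x) * x ^ α) = 0) : r = 0 := by
  by_contra h0
  have hnn : 0 ≤ᵐ[volume.restrict (Set.Ioi (0:ℝ))]
      fun x => (r * r).eval x * (Real.exp (-x) * x ^ α) := by
    rw [Filter.EventuallyLE, ae_restrict_iff' measurableSet_Ioi]
    filter_upwards with x hx
    have hx0 : (0:ℝ) < x := hx
    simp only [Polynomial.eval_mul, Pi.zero_apply]
    have h1 : (0:ℝ) < Real.exp (-x) * x ^ α :=
      mul_pos (Real.exp_pos _) (Real.rpow_pos_of_pos hx0 _)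
    exact mul_nonneg (mul_self_nonneg _) h1.le
  have := (integral_eq_zero_iff_of_nonneg_ae hnn (lag_int hα _)).mp hr
  have hae : ∀ᵐ x ∂(volume.restrict (Set.Ioi (0:ℝ))), r.eval x = 0 := by
    filter_upwards [this, ae_restrict_mem measurableSet_Ioi] with x hx hmem
    have hx0 : (0:ℝ) < x := hmem
    have h1 : (0:ℝ) < Real.exp (-x) * x ^ α :=
      mul_pos (Real.exp_pos _) (Real.rpow_pos_of_pos hx0 _)
    simp only [Pi.zero_apply, Polynomial.eval_mul] at hx
    rcases mul_eq_zero.mp hx with h | h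
    · exact mul_self_eq_zero.mp h
    · exact absurd h h1.ne'
  have hms : MeasurableSet {x : ℝ | ¬ r.eval x = 0} := by
    have : IsClosed {x : ℝ | r.eval x = 0} :=
      isClosed_eq (Polynomial.continuous r) continuous_const
    exact this.measurableSet.compl
  have hzero : volume ({x : ℝ | ¬ r.eval x = 0} ∩ Set.Ioi 0) = 0 := by
    have := MeasureTheory.ae_iff.mp hae
    rwa [Measure.restrict_apply hms] at this
  have hfin : Set.Finite {x : ℝ | r.eval x = 0} := by
    simpa [Polynomial.IsRoot] using Polynomial.finite_setOf_isRoot h0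
  have hsub : Set.Ioi (0:ℝ) ⊆ {x : ℝ | r.eval x = 0}
      ∪ ({x : ℝ | ¬ r.eval x = 0} ∩ Set.Ioi 0) := by
    intro x hx
    by_cases hxe : r.eval x = 0
    · exact Or.inl hxe
    · exact Or.inr ⟨hxe, hx⟩
  have : volume (Set.Ioi (0:ℝ)) ≤ volume {x : ℝ | r.eval x = 0}
      + volume ({x : ℝ | ¬ r.eval x = 0} ∩ Set.Ioi 0) :=
    le_trans (measure_mono hsub) (measure_union_le _ _)
  rw [hfin.measure_zero, hzero, Real.volume_Ioi] at this
  simp at this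
lemma deg_Lopl_le (α : ℝ) (p : Polynomial ℝ) :
    (X * derivative (derivative p) + (C (α + 1) - X) * derivative p).natDegree
      ≤ p.natDegree := by
  by_cases h0 : p.natDegree = 0
  · have hp : derivative p = 0 := by
      rw [Polynomial.eq_C_of_natDegree_le_zero h0.le]; simp
    simp [hp]
  · apply le_trans (Polynomial.natDegree_add_le _ _)
    apply max_le
    · apply le_trans (Polynomial.natDegree_mul_le)
      have h2 : (derivative (derivative p)).natDegree ≤ p.natDegree - 1 - 1 :=
        le_trans (Polynomial.natDegree_derivative_le _)
          (Nat.sub_le_sub_right (Polynomial.natDegree_derivative_le _) 1)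
      have h3 : (X : Polynomial ℝ).natDegree = 1 := Polynomial.natDegree_X
      omega
    · apply le_trans (Polynomial.natDegree_mul_le)
      have h1 : (C (α + 1) - X : Polynomial ℝ).natDegree ≤ 1 := by
        apply le_trans (Polynomial.natDegree_sub_le _ _)
        simp
      have h2 : (derivative p).natDegree ≤ p.natDegree - 1 :=
        Polynomial.natDegree_derivative_le _
      omega

lemma lag_orth_lower {α : ℝ} (hα : -1 < α) (ℓ : ℕ → Polynomial ℝ)
    (hm : ∀ n, (ℓ n).Monic) (hd : ∀ n, (ℓ n).natDegree = n)
    (horth : ∀ n m : ℕ, n ≠ m →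
      ∫ x in Set.Ioi (0:ℝ), (ℓ n).eval x * (ℓ m).eval x * (Real.exp (-x) * x ^ α) = 0)
    (n : ℕ) (s : Polynomial ℝ) (hs : s.degree < n) :
    ∫ x in Set.Ioi (0:ℝ), (s * ℓ n).eval x * (Real.exp (-x) * x ^ α) = 0 := by
  refine vanish_of_lt
    (fun t => ∫ x in Set.Ioi (0:ℝ), (t * ℓ n).eval x * (Real.exp (-x) * x ^ α))
    (fun p q => ?_) (fun c p => ?_) ℓ hm hd n (fun m hmn => ?_) s hs
  · beta_reduce
    rw [show (p + q) * ℓ n = p * ℓ n + q * ℓ n by ring, lag_Jadd hα]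
  · beta_reduce
    rw [show C c * p * ℓ n = C c * (p * ℓ n) by ring, lag_Jsmul]
  · have := horth m n (ne_of_lt hmn)
    beta_reduce
    rw [show (fun x => (ℓ m * ℓ n).eval x * (Real.exp (-x) * x ^ α))
      = fun x => (ℓ m).eval x * (ℓ n).eval x * (Real.exp (-x) * x ^ α)
      from funext fun x => by simp [Polynomial.eval_mul]]
    exact this

lemma laguerre_ode {α : ℝ} (hα : -1 < α) (ℓ : ℕ → Polynomial ℝ)
    (hm : ∀ n, (ℓ n).Monic) (hd : ∀ n, (ℓ n).natDegree = n)
    (horth : ∀ n m : ℕ, n ≠ m →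
      ∫ x in Set.Ioi (0:ℝ), (ℓ n).eval x * (ℓ m).eval x * (Real.exp (-x) * x ^ α) = 0)
    (n : ℕ) :
    X * derivative (derivative (ℓ n)) + (C (α + 1) - X) * derivative (ℓ n)
      + C ((n : ℝ)) * ℓ n = 0 := by
  by_cases hn0 : n = 0
  · subst hn0
    have h1 : ℓ 0 = 1 := ((hm 0).natDegree_eq_zero).mp (hd 0)
    simp [h1]
  · set p := ℓ n with hp
    set r := X * derivative (derivative p) + (C (α + 1) - X) * derivative p
      + C ((n : ℝ)) * p with hr
    obtain ⟨k, rfl⟩ : ∃ k, n = k + 1 := ⟨n - 1, by omega⟩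
    have hcoeffp : p.coeff (k + 1) = 1 := by
      have := (hm (k + 1)).coeff_natDegree
      rwa [hd (k + 1)] at this
    have hcoeffp2 : p.coeff (k + 2) = 0 :=
      Polynomial.coeff_eq_zero_of_natDegree_lt (by rw [hd]; omega)
    have hrnat : r.natDegree ≤ k + 1 := by
      apply le_trans (Polynomial.natDegree_add_le _ _)
      apply max_le
      · exact le_trans (deg_Lopl_le α p) (le_of_eq (hd _))
      · exact le_trans (Polynomial.natDegree_C_mul_le _ _) (le_of_eq (hd _))
    have hrdeg : r.degree < ((k + 1 : ℕ) : ℕ) := by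
      rw [Polynomial.degree_lt_iff_coeff_zero]
      intro m hm'
      rcases eq_or_lt_of_le hm' with heq | hlt
      · subst heq
        have hdp1 : (derivative p).coeff (k + 1) = 0 := by
          rw [Polynomial.coeff_derivative, hcoeffp2, zero_mul]
        have hdpk : (derivative p).coeff k = (k : ℝ) + 1 := by
          rw [Polynomial.coeff_derivative, hcoeffp, one_mul]
        have hc1 : (X * derivative (derivative p)).coeff (k + 1) = 0 := by
          rw [Polynomial.coeff_X_mul, Polynomial.coeff_derivative, hdp1, zero_mul]
        have hc2 : ((C (α + 1) - X) * derivative p).coeff (k + 1) = -((k:ℝ) + 1) := by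
          rw [sub_mul, Polynomial.coeff_sub, Polynomial.coeff_C_mul, hdp1,
            Polynomial.coeff_X_mul, hdpk]
          ring
        have hc3 : (C (((k:ℕ) + 1 : ℕ) : ℝ) * p).coeff (k + 1) = (k:ℝ) + 1 := by
          rw [Polynomial.coeff_C_mul, hcoeffp, mul_one]
          push_cast; ring
        rw [hr, Polynomial.coeff_add, Polynomial.coeff_add, hc1, hc2, hc3]
        ring
      · exact Polynomial.coeff_eq_zero_of_natDegree_lt (lt_of_le_of_lt hrnat hlt)
    have horthr : ∀ m, m < k + 1 →
        ∫ x in Set.Ioi (0:ℝ), (r * ℓ m).eval x * (Real.exp (-x) * x ^ α) = 0 := by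
      intro m hmn
      have e1 := lag_ibp hα p (ℓ m)
      have e2 := lag_ibp hα (ℓ m) p
      have e3 : ∫ x in Set.Ioi (0:ℝ),
          ((X * derivative (derivative (ℓ m)) + (C (α + 1) - X) * derivative (ℓ m)) * p).eval x
            * (Real.exp (-x) * x ^ α) = 0 := by
        apply lag_orth_lower hα ℓ hm hd horth (k + 1)
        calc (X * derivative (derivative (ℓ m)) + (C (α + 1) - X) * derivative (ℓ m)).degree
            ≤ ((X * derivative (derivative (ℓ m))
                + (C (α + 1) - X) * derivative (ℓ m)).natDegree : WithBot ℕ) :=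
              Polynomial.degree_le_natDegree
          _ < ((k + 1 : ℕ) : WithBot ℕ) := by
              exact_mod_cast lt_of_le_of_lt
                (le_trans (deg_Lopl_le α (ℓ m)) (le_of_eq (hd m))) hmn
      have e4 : ∫ x in Set.Ioi (0:ℝ), (p * ℓ m).eval x * (Real.exp (-x) * x ^ α) = 0 := by
        have := horth (k + 1) m (by omega)
        rw [show (fun x => (p * ℓ m).eval x * (Real.exp (-x) * x ^ α))
          = fun x => (ℓ (k + 1)).eval x * (ℓ m).eval x * (Real.exp (-x) * x ^ α)
          from funext fun x => by simp [hp, Polynomial.eval_mul]]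
        exact this
      have e5 : ∫ x in Set.Ioi (0:ℝ), (X * derivative p * derivative (ℓ m)).eval x
            * (Real.exp (-x) * x ^ α)
          = ∫ x in Set.Ioi (0:ℝ), (X * derivative (ℓ m) * derivative p).eval x
            * (Real.exp (-x) * x ^ α) := by
        rw [show X * derivative p * derivative (ℓ m) = X * derivative (ℓ m) * derivative p
          by ring]
      calc ∫ x in Set.Ioi (0:ℝ), (r * ℓ m).eval x * (Real.exp (-x) * x ^ α)
          = ∫ x in Set.Ioi (0:ℝ),
              ((X * derivative (derivative p) + (C (α + 1) - X) * derivative p) * ℓ m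
                + C (((k:ℕ) + 1 : ℕ) : ℝ) * (p * ℓ m)).eval x * (Real.exp (-x) * x ^ α) := by
            rw [show r * ℓ m
              = (X * derivative (derivative p) + (C (α + 1) - X) * derivative p) * ℓ m
                + C (((k:ℕ) + 1 : ℕ) : ℝ) * (p * ℓ m) by rw [hr]; ring]
        _ = (∫ x in Set.Ioi (0:ℝ),
              ((X * derivative (derivative p) + (C (α + 1) - X) * derivative p) * ℓ m).eval x
                * (Real.exp (-x) * x ^ α))
            + (((k:ℕ) + 1 : ℕ) : ℝ) * ∫ x in Set.Ioi (0:ℝ), (p * ℓ m).eval x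
                * (Real.exp (-x) * x ^ α) := by
            rw [lag_Jadd hα, lag_Jsmul]
        _ = 0 := by
            rw [e4, mul_zero, add_zero, e1, e5, ← e2, e3]
    have hrr : ∫ x in Set.Ioi (0:ℝ), (r * r).eval x * (Real.exp (-x) * x ^ α) = 0 := by
      refine vanish_of_lt
        (fun t => ∫ x in Set.Ioi (0:ℝ), (r * t).eval x * (Real.exp (-x) * x ^ α))
        (fun p' q' => ?_) (fun c p' => ?_) ℓ hm hd (k + 1) (fun m hmn => ?_) r hrdeg
      · beta_reduce
        rw [show r * (p' + q') = r * p' + r * q' by ring, lag_Jadd hα]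
      · beta_reduce
        rw [show r * (C c * p') = C c * (r * p') by ring, lag_Jsmul]
      · beta_reduce
        exact horthr m hmn
    exact lag_pos hα r hrr
lemma hermite_eval_ode (h : ℕ → Polynomial ℝ)
    (hm : ∀ n, (h n).Monic) (hd : ∀ n, (h n).natDegree = n)
    (horth : ∀ n m : ℕ, n ≠ m →
      ∫ x : ℝ, (h n).eval x * (h m).eval x * Real.exp (-x ^ 2) = 0)
    (n : ℕ) (x : ℝ) :
    (derivative (derivative (h n))).eval x - 2 * x * (derivative (h n)).eval x
      + 2 * (n : ℝ) * (h n).eval x = 0 := by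
  have := congrArg (Polynomial.eval x) (hermite_ode h hm hd horth n)
  simp only [Polynomial.eval_add, Polynomial.eval_sub, Polynomial.eval_mul,
    Polynomial.eval_C, Polynomial.eval_X, Polynomial.eval_zero] at this
  linarith

lemma laguerre_eval_ode {α : ℝ} (hα : -1 < α) (ℓ : ℕ → Polynomial ℝ)
    (hm : ∀ n, (ℓ n).Monic) (hd : ∀ n, (ℓ n).natDegree = n)
    (horth : ∀ n m : ℕ, n ≠ m →
      ∫ x in Set.Ioi (0:ℝ), (ℓ n).eval x * (ℓ m).eval x * (Real.exp (-x) * x ^ α) = 0)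
    (n : ℕ) (x : ℝ) :
    x * (derivative (derivative (ℓ n))).eval x
      + (α + 1 - x) * (derivative (ℓ n)).eval x + (n : ℝ) * (ℓ n).eval x = 0 := by
  have := congrArg (Polynomial.eval x) (laguerre_ode hα ℓ hm hd horth n)
  simp only [Polynomial.eval_add, Polynomial.eval_sub, Polynomial.eval_mul,
    Polynomial.eval_C, Polynomial.eval_X, Polynomial.eval_zero] at this
  linarith
/-- The 2×2 Hermite–Laguerre-type matrix orthogonal polynomials built from the
monic Hermite polynomials `h` and the monic Laguerre polynomials `ℓ^{(α)}` (for
`n = 0` the terms with factor `n` vanish). -/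
def QHL (α a : ℝ) (h ℓ : ℕ → Polynomial ℝ) (n : ℕ) (x : ℝ) :
    Matrix (Fin 2) (Fin 2) ℝ :=
  !![(h n).eval x,
     a * ((ℓ (n + 1)).eval x - x * (h n).eval x);
     -(a * (n : ℝ) * ((2 : ℝ) ^ (n - 1) / Real.sqrt π) *
        Real.Gamma ((n : ℝ) + α + 1) * (h (n - 1)).eval x),
     a ^ 2 * (n : ℝ) * ((2 : ℝ) ^ (n - 1) / Real.sqrt π) *
        Real.Gamma ((n : ℝ) + α + 1) * x * (h (n - 1)).eval x + (ℓ n).eval x]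

/-- The 2×2 Hermite–Laguerre-type polynomials `Qₙ` are eigenfunctions of the
second-order differential operator
`D = ∂² [[1, 2ax²−ax], [0, 2x]] + ∂ [[−2x, 2ax(α+3)], [0, 2(α+1−x)]]
      + [[−2, 2a(α+1)], [0, 0]]`
with eigenvalue `diag(−2n−2, −2n)`. -/
theorem QHL_eigenfunction
    (α : ℝ) (hα : -1 < α) (a : ℝ) (ha : a ≠ 0)
    (h ℓ : ℕ → Polynomial ℝ)
    (hhmonic : ∀ n, (h n).Monic) (hhdeg : ∀ n, (h n).natDegree = n)
    (hhorth : ∀ n m : ℕ, n ≠ m →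
      ∫ x : ℝ, (h n).eval x * (h m).eval x * Real.exp (-x ^ 2) = 0)
    (hlmonic : ∀ n, (ℓ n).Monic) (hldeg : ∀ n, (ℓ n).natDegree = n)
    (hlorth : ∀ n m : ℕ, n ≠ m →
      ∫ x in Set.Ioi (0 : ℝ),
        (ℓ n).eval x * (ℓ m).eval x * (Real.exp (-x) * x ^ α) = 0) :
    ∀ (n : ℕ) (x : ℝ),
      (Matrix.of fun i j : Fin 2 =>
          deriv (fun y => deriv (fun z => QHL α a h ℓ n z i j) y) x) *
          !![1, 2 * a * x ^ 2 - a * x; 0, 2 * x]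
      + (Matrix.of fun i j : Fin 2 =>
          deriv (fun y => QHL α a h ℓ n y i j) x) *
          !![-2 * x, 2 * a * x * (α + 3); 0, 2 * (α + 1 - x)]
      + QHL α a h ℓ n x * !![-2, 2 * a * (α + 1); 0, 0]
      = !![-2 * (n : ℝ) - 2, 0; 0, -2 * (n : ℝ)] * QHL α a h ℓ n x := by
  intro n x
  set P00 : Polynomial ℝ := h n with hP00
  set P01 : Polynomial ℝ := C a * (ℓ (n + 1) - X * h n) with hP01
  set P10 : Polynomial ℝ := C (-(a * (n : ℝ) * ((2 : ℝ) ^ (n - 1) / Real.sqrt π) *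
      Real.Gamma ((n : ℝ) + α + 1))) * h (n - 1) with hP10
  set P11 : Polynomial ℝ := C (a ^ 2 * (n : ℝ) * ((2 : ℝ) ^ (n - 1) / Real.sqrt π) *
      Real.Gamma ((n : ℝ) + α + 1)) * (X * h (n - 1)) + ℓ n with hP11
  have F00 : (fun z => QHL α a h ℓ n z 0 0) = fun z => P00.eval z := by
    funext z; simp [QHL, hP00]
  have F01 : (fun z => QHL α a h ℓ n z 0 1) = fun z => P01.eval z := by
    funext z; simp [QHL, hP01]; try ring
  have F10 : (fun z => QHL α a h ℓ n z 1 0) = fun z => P10.eval z := by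
    funext z; simp [QHL, hP10]; try ring
  have F11 : (fun z => QHL α a h ℓ n z 1 1) = fun z => P11.eval z := by
    funext z; simp [QHL, hP11]; try ring
  have G2 : (Matrix.of fun i j : Fin 2 =>
      deriv (fun y => deriv (fun z => QHL α a h ℓ n z i j) y) x)
      = !![(derivative (derivative P00)).eval x, (derivative (derivative P01)).eval x;
           (derivative (derivative P10)).eval x, (derivative (derivative P11)).eval x] := by
    ext i j
    fin_cases i <;> fin_cases j <;>
      simp only [Matrix.of_apply, Matrix.cons_val', Matrix.cons_val_zero, Matrix.cons_val_one,
        Matrix.head_cons, Matrix.empty_val', Matrix.cons_val_fin_one, Matrix.head_fin_const,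
        Fin.mk_zero, Fin.mk_one, Fin.isValue]
    · rw [F00]; simp only [Polynomial.deriv]
    · rw [F01]; simp only [Polynomial.deriv]
    · rw [F10]; simp only [Polynomial.deriv]
    · rw [F11]; simp only [Polynomial.deriv]
  have G1 : (Matrix.of fun i j : Fin 2 =>
      deriv (fun y => QHL α a h ℓ n y i j) x)
      = !![(derivative P00).eval x, (derivative P01).eval x;
           (derivative P10).eval x, (derivative P11).eval x] := by
    ext i j
    fin_cases i <;> fin_cases j <;>
      simp only [Matrix.of_apply, Matrix.cons_val', Matrix.cons_val_zero, Matrix.cons_val_one,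
        Matrix.head_cons, Matrix.empty_val', Matrix.cons_val_fin_one, Matrix.head_fin_const,
        Fin.mk_zero, Fin.mk_one, Fin.isValue]
    · rw [F00]; simp only [Polynomial.deriv]
    · rw [F01]; simp only [Polynomial.deriv]
    · rw [F10]; simp only [Polynomial.deriv]
    · rw [F11]; simp only [Polynomial.deriv]
  have G0 : QHL α a h ℓ n x
      = !![P00.eval x, P01.eval x; P10.eval x, P11.eval x] := by
    ext i j
    fin_cases i <;> fin_cases j
    · exact congrFun F00 x
    · exact congrFun F01 x
    · exact congrFun F10 x
    · exact congrFun F11 x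
  rw [G2, G1, G0]
  -- scalar ODE identities
  have IH : (derivative (derivative (h n))).eval x - 2 * x * (derivative (h n)).eval x
      + 2 * (n : ℝ) * (h n).eval x = 0 := hermite_eval_ode h hhmonic hhdeg hhorth n x
  have IHm : (n : ℝ) * ((derivative (derivative (h (n - 1)))).eval x
      - 2 * x * (derivative (h (n - 1))).eval x
      + 2 * ((n : ℝ) - 1) * (h (n - 1)).eval x) = 0 := by
    cases n with
    | zero => simp
    | succ k =>
      have hk := hermite_eval_ode h hhmonic hhdeg hhorth k x
      simp only [Nat.add_sub_cancel]
      push_cast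
      linear_combination ((k : ℝ) + 1) * hk
  have IL : x * (derivative (derivative (ℓ n))).eval x
      + (α + 1 - x) * (derivative (ℓ n)).eval x + (n : ℝ) * (ℓ n).eval x = 0 :=
    laguerre_eval_ode hα ℓ hlmonic hldeg hlorth n x
  have ILp : x * (derivative (derivative (ℓ (n + 1)))).eval x
      + (α + 1 - x) * (derivative (ℓ (n + 1))).eval x
      + ((n : ℝ) + 1) * (ℓ (n + 1)).eval x = 0 := by
    have := laguerre_eval_ode hα ℓ hlmonic hldeg hlorth (n + 1) x
    push_cast at this
    linarith
  ext i j
  fin_cases i <;> fin_cases j <;>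
    simp only [Fin.mk_zero, Fin.mk_one, hP00, hP01, hP10, hP11, Matrix.mul_apply,
      Matrix.of_apply, Fin.sum_univ_two, Matrix.cons_val',
      Matrix.cons_val_zero, Matrix.cons_val_one, Matrix.head_cons, Matrix.empty_val',
      Matrix.cons_val_fin_one, Matrix.head_fin_const, Matrix.add_apply, Fin.isValue,
      Polynomial.derivative_mul, Polynomial.derivative_add, Polynomial.derivative_sub,
      Polynomial.derivative_C, Polynomial.derivative_X, Polynomial.eval_add,
      Polynomial.eval_sub, Polynomial.eval_mul, Polynomial.eval_C, Polynomial.eval_X,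
      Polynomial.eval_one, Polynomial.eval_zero, zero_mul, mul_zero, zero_add, add_zero,
      one_mul, mul_one]
  · linear_combination IH
  · linear_combination (-(a * x)) * IH + (2 * a) * ILp
  · linear_combination (-(a * ((2 : ℝ) ^ (n - 1) / Real.sqrt π)
      * Real.Gamma ((n : ℝ) + α + 1))) * IHm
  · linear_combination (a ^ 2 * ((2 : ℝ) ^ (n - 1) / Real.sqrt π)
      * Real.Gamma ((n : ℝ) + α + 1) * x) * IHm + 2 * IL
end
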